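/- Let ψ = √3 + 1. Then arg(1 + ψ^{−1}e^{(2/12)·2πi}) = arg(1 + ψ^{−1}e^{(5/12)·2πi}), i.e. the points 0, 1 + ψ^{−1}e^{πi/3}, and 1 + ψ^{−1}e^{5πi/6} are collinear. -/
import Mathlib


open Real Complex

theorem psi_collinear (ψ : ℝ) (hψ : ψ = Real.sqrt 3 + 1) :
    Complex.arg (1 + (ψ⁻¹ : ℝ) * Complex.exp (((2 / 12 : ℝ) * (2 * π)) * Complex.I)) =
    Complex.arg (1 + (ψ⁻¹ : ℝ) * Complex.exp (((5 / 12 : ℝ) * (2 * π)) * Complex.I)) := by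
  have hs : Real.sqrt 3 ^ 2 = 3 := Real.sq_sqrt (by norm_num)
  have hs1 : (1:ℝ) ≤ Real.sqrt 3 := by nlinarith [Real.sqrt_nonneg 3]
  have hspos : (0:ℝ) < Real.sqrt 3 := by linarith
  have h1 : (2 / 12 : ℝ) * (2 * π) = π / 3 := by ring
  have h2 : (5 / 12 : ℝ) * (2 * π) = π - π / 6 := by ring
  have key : (1 + (ψ⁻¹ : ℝ) * Complex.exp (((2 / 12 : ℝ) * (2 * π)) * Complex.I))
      = (Real.sqrt 3 : ℝ) * (1 + (ψ⁻¹ : ℝ) * Complex.exp (((5 / 12 : ℝ) * (2 * π)) * Complex.I)) := by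
    rw [show ((2 / 12 : ℝ) : ℂ) * (2 * (π:ℝ)) * Complex.I = ((π/3 : ℝ) : ℂ) * Complex.I by
        push_cast; ring,
      show ((5 / 12 : ℝ) : ℂ) * (2 * (π:ℝ)) * Complex.I = ((π - π/6 : ℝ) : ℂ) * Complex.I by
        push_cast; ring]
    apply Complex.ext <;>
    · simp only [Complex.add_re, Complex.add_im, Complex.one_re, Complex.one_im,
        Complex.mul_re, Complex.mul_im, Complex.ofReal_re, Complex.ofReal_im,
        Complex.exp_ofReal_mul_I_re, Complex.exp_ofReal_mul_I_im,
        Real.cos_pi_div_three, Real.sin_pi_div_three, Real.cos_pi_sub, Real.sin_pi_sub,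
        Real.cos_pi_div_six, Real.sin_pi_div_six, hψ]
      have hne : Real.sqrt 3 + 1 ≠ 0 := by positivity
      field_simp
      all_goals nlinarith [hs, hspos]
  rw [key, Complex.arg_real_mul _ hspos]
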